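/- arXiv:1612.03736 — 2 statements merged into one kernel-verified Lean document; each statement's English description precedes it below -/
import Mathlib

section
/- Let G be a connected finite simple graph with more than 2 vertices which is 1-well-covered, and let α = α(G). Then s_0 ≤ s_1 ≤ ⋯ ≤ s_{⌈2α/3⌉}; that is, s_k ≤ s_{k+1} for every k with 0 ≤ k < ⌈2α/3⌉. -/
open Finset
open scoped Classical

variable {V : Type*}

/-- `S` is an independent set in `G`: its vertices are pairwise non-adjacent. -/
def IsIndepSet (G : SimpleGraph V) (S : Finset V) : Prop :=
  ∀ ⦃u⦄, u ∈ S → ∀ ⦃v⦄, v ∈ S → ¬ G.Adj u v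

/-- The neighborhood `N(S)`: all vertices having at least one neighbor in `S`. -/
noncomputable def neigh [Fintype V] (G : SimpleGraph V) (S : Finset V) : Finset V :=
  Finset.univ.filter fun v => ∃ u ∈ S, G.Adj u v

/-- The independence number `α(G)`: the maximum size of an independent set. -/
noncomputable def indepNum [Fintype V] (G : SimpleGraph V) : ℕ :=
  (Finset.univ.filter fun S : Finset V => IsIndepSet G S).sup Finset.card

/-- `s_k`: the number of independent sets of size `k` in `G`. -/
noncomputable def indepCount [Fintype V] (G : SimpleGraph V) (k : ℕ) : ℕ :=
  (Finset.univ.filter fun S : Finset V => IsIndepSet G S ∧ S.card = k).card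

/-- A maximal independent set (not properly contained in another independent set). -/
def IsMaximalIndepSet (G : SimpleGraph V) (S : Finset V) : Prop :=
  IsIndepSet G S ∧ ∀ T : Finset V, IsIndepSet G T → S ⊆ T → S = T

/-- `G` is well-covered: all maximal independent sets have the same cardinality. -/
def IsWellCovered (G : SimpleGraph V) : Prop :=
  ∀ S T : Finset V, IsMaximalIndepSet G S → IsMaximalIndepSet G T → S.card = T.card

/-- `G` is 1-well-covered: it is well-covered, has at least two vertices, and
deleting any vertex leaves a well-covered graph. -/
def IsOneWellCovered [Fintype V] (G : SimpleGraph V) : Prop :=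
  IsWellCovered G ∧ 2 ≤ Fintype.card V ∧
    ∀ v : V, IsWellCovered (G.induce ({v}ᶜ : Set V))

/-- The corona `H ∘ K₂`: for each vertex `v` of `H`, two new vertices
(`(v, false)` and `(v, true)`) adjacent to each other and to `v` are added. -/
def corona2 (H : SimpleGraph V) : SimpleGraph (V ⊕ V × Bool) :=
  SimpleGraph.fromRel fun x y =>
    match x, y with
    | Sum.inl u, Sum.inl v => H.Adj u v
    | Sum.inl u, Sum.inr (v, _) => u = v
    | Sum.inr (u, _), Sum.inr (v, _) => u = v
    | _, _ => False

set_option linter.unusedSectionVars false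
section MyAux

variable [Fintype V]

noncomputable def extSet (G : SimpleGraph V) (S : Finset V) : Finset V :=
  Finset.univ.filter fun v => v ∉ S ∧ ∀ u ∈ S, ¬ G.Adj u v

lemma mem_extSet {G : SimpleGraph V} {S : Finset V} {v : V} :
    v ∈ extSet G S ↔ v ∉ S ∧ ∀ u ∈ S, ¬ G.Adj u v := by
  simp [extSet]

lemma isIndepSet_insert {G : SimpleGraph V} {S : Finset V} {v : V}
    (hS : IsIndepSet G S) (hv : v ∈ extSet G S) : IsIndepSet G (insert v S) := by
  rw [mem_extSet] at hv
  intro a ha b hb hab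
  rcases Finset.mem_insert.1 ha with rfl | ha'
  · rcases Finset.mem_insert.1 hb with rfl | hb'
    · exact G.loopless.irrefl _ hab
    · exact hv.2 b hb' hab.symm
  · rcases Finset.mem_insert.1 hb with rfl | hb'
    · exact hv.2 a ha' hab
    · exact hS ha' hb' hab

lemma exists_maximal_sup (F : Finset V → Prop) {S : Finset V}
    (hS : F S) : ∃ M, S ⊆ M ∧ F M ∧ ∀ T, F T → M ⊆ T → M = T := by
  have hne : (Finset.univ.filter fun T : Finset V => F T ∧ S ⊆ T).Nonempty :=
    ⟨S, by simp [hS]⟩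
  obtain ⟨M, hM, hmax⟩ := Finset.exists_max_image _ Finset.card hne
  simp only [Finset.mem_filter, Finset.mem_univ, true_and] at hM
  refine ⟨M, hM.2, hM.1, fun T hT hMT => ?_⟩
  have hTmem : T ∈ Finset.univ.filter fun T : Finset V => F T ∧ S ⊆ T := by
    simp [hT, hM.2.trans hMT]
  exact Finset.eq_of_subset_of_card_le hMT (hmax T hTmem)

lemma card_le_indepNum {G : SimpleGraph V} {S : Finset V} (hS : IsIndepSet G S) :
    S.card ≤ indepNum G :=
  Finset.le_sup (by simp [hS])

lemma isIndepSet_empty (G : SimpleGraph V) : IsIndepSet G (∅ : Finset V) := by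
  intro u hu; simp at hu

lemma maximal_card_eq {G : SimpleGraph V} (hwc : IsWellCovered G) {M : Finset V}
    (hM : IsMaximalIndepSet G M) : M.card = indepNum G := by
  obtain ⟨A, -, hA, hAmax⟩ := exists_maximal_sup (IsIndepSet G) (isIndepSet_empty G)
  have hAm : IsMaximalIndepSet G A := ⟨hA, hAmax⟩
  have h1 : indepNum G ≤ A.card := by
    apply Finset.sup_le
    intro B hB
    simp only [Finset.mem_filter, Finset.mem_univ, true_and] at hB
    obtain ⟨MB, hBMB, hMB, hMBmax⟩ := exists_maximal_sup (IsIndepSet G) hB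
    have : MB.card = A.card := hwc MB A ⟨hMB, hMBmax⟩ hAm
    calc B.card ≤ MB.card := Finset.card_le_card hBMB
    _ = A.card := this
  have h2 : A.card ≤ indepNum G := card_le_indepNum hA
  have : A.card = indepNum G := le_antisymm h2 h1
  rw [← this]
  exact hwc M A hM hAm

/-- Transfer of well-coveredness of `G.induce {v}ᶜ` to statements about finsets of `V`. -/
lemma wc_del {G : SimpleGraph V} {v : V}
    (hv : IsWellCovered (G.induce ({v}ᶜ : Set V)))
    {M₁ M₂ : Finset V}
    (h₁ : IsIndepSet G M₁) (hv₁ : v ∉ M₁)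
    (hmax₁ : ∀ T, IsIndepSet G T → v ∉ T → M₁ ⊆ T → M₁ = T)
    (h₂ : IsIndepSet G M₂) (hv₂ : v ∉ M₂)
    (hmax₂ : ∀ T, IsIndepSet G T → v ∉ T → M₂ ⊆ T → M₂ = T) :
    M₁.card = M₂.card := by
  classical
  set p : V → Prop := fun x => x ∈ ({v}ᶜ : Set V) with hp
  have hpx : ∀ x, p x ↔ x ≠ v := by intro x; simp [hp]
  have key : ∀ M : Finset V, IsIndepSet G M → v ∉ M →
      (∀ T, IsIndepSet G T → v ∉ T → M ⊆ T → M = T) →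
      IsMaximalIndepSet (G.induce ({v}ᶜ : Set V)) (M.subtype p) := by
    intro M hM hvM hmaxM
    constructor
    · intro a ha b hb hab
      rw [Finset.mem_subtype] at ha hb
      exact hM ha hb hab
    · intro T' hT' hsub
      set T : Finset V := T'.map (Function.Embedding.subtype p) with hT
      have hmemT : ∀ x, x ∈ T ↔ ∃ hx : p x, (⟨x, hx⟩ : {y // p y}) ∈ T' := by
        intro x
        simp only [hT, Finset.mem_map, Function.Embedding.coe_subtype]
        constructor
        · rintro ⟨⟨y, hy⟩, hyT, rfl⟩; exact ⟨hy, hyT⟩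
        · rintro ⟨hx, hxT⟩; exact ⟨⟨x, hx⟩, hxT, rfl⟩
      have hvT : v ∉ T := by
        rw [hmemT]
        rintro ⟨hx, -⟩
        exact ((hpx v).1 hx) rfl
      have hTindep : IsIndepSet G T := by
        intro a ha b hb hab
        rw [hmemT] at ha hb
        obtain ⟨hpa, haT⟩ := ha
        obtain ⟨hpb, hbT⟩ := hb
        exact hT' haT hbT hab
      have hMT : M ⊆ T := by
        intro x hx
        have hpxx : p x := (hpx x).2 (by rintro rfl; exact hvM hx)
        rw [hmemT]
        exact ⟨hpxx, hsub (Finset.mem_subtype.2 hx)⟩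
      have hMeq : M = T := hmaxM T hTindep hvT hMT
      apply Finset.ext
      rintro ⟨x, hx⟩
      rw [Finset.mem_subtype]
      constructor
      · intro hxM
        have := hMT hxM
        rw [hmemT] at this
        obtain ⟨hx', hxT'⟩ := this
        exact hxT'
      · intro hxT'
        have : x ∈ T := (hmemT x).2 ⟨hx, hxT'⟩
        rw [hMeq]; exact this
  have c1 : (M₁.subtype p).card = M₁.card := by
    rw [Finset.card_subtype, Finset.filter_true_of_mem]
    intro x hx
    exact (hpx x).2 (by rintro rfl; exact hv₁ hx)
  have c2 : (M₂.subtype p).card = M₂.card := by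
    rw [Finset.card_subtype, Finset.filter_true_of_mem]
    intro x hx
    exact (hpx x).2 (by rintro rfl; exact hv₂ hx)
  rw [← c1, ← c2]
  exact hv _ _ (key M₁ h₁ hv₁ hmax₁) (key M₂ h₂ hv₂ hmax₂)

end MyAux

section MyAux2

variable [Fintype V]

/-- In a connected 1-well-covered graph, every extension vertex of an independent
set has a neighbor among the extension vertices. -/
lemma no_isolated_ext {G : SimpleGraph V} (hconn : G.Connected)
    (hcard : 2 < Fintype.card V) (h1wc : IsOneWellCovered G)
    {S : Finset V} (hS : IsIndepSet G S) {v : V} (hv : v ∈ extSet G S) :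
    ∃ w ∈ extSet G S, G.Adj v w := by
  by_contra h
  push_neg at h
  rw [mem_extSet] at hv
  -- every neighbor of v has a neighbor in S
  have hnb : ∀ w, G.Adj v w → ∃ u ∈ S, G.Adj u w := by
    intro w hw
    by_contra hc
    push_neg at hc
    have hwS : w ∉ S := fun hmem => hv.2 w hmem hw.symm
    exact h w (mem_extSet.2 ⟨hwS, hc⟩) hw
  -- maximal independent superset of S avoiding v
  obtain ⟨M₁, hSM₁, hM₁, hmax₁⟩ :=
    exists_maximal_sup (fun T => IsIndepSet G T ∧ v ∉ T) ⟨hS, hv.1⟩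
  -- insert v M₁ is independent
  have hins : IsIndepSet G (insert v M₁) := by
    intro a ha b hb hab
    rcases Finset.mem_insert.1 ha with rfl | ha'
    · rcases Finset.mem_insert.1 hb with rfl | hb'
      · exact G.loopless.irrefl _ hab
      · obtain ⟨u, huS, hub⟩ := hnb b hab
        exact hM₁.1 (hSM₁ huS) hb' hub
    · rcases Finset.mem_insert.1 hb with rfl | hb'
      · obtain ⟨u, huS, hua⟩ := hnb a hab.symm
        exact hM₁.1 (hSM₁ huS) ha' hua
      · exact hM₁.1 ha' hb' hab
  have hcard₁ : M₁.card + 1 ≤ indepNum G := by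
    have h1 := card_le_indepNum hins
    rwa [Finset.card_insert_of_notMem hM₁.2] at h1
  -- v has a neighbor u
  have hadjex : ∃ u, G.Adj v u := by
    obtain ⟨w, hw⟩ := Fintype.exists_ne_of_one_lt_card (by omega) v
    obtain ⟨p⟩ := hconn.preconnected v w
    cases p with
    | nil => exact absurd rfl hw
    | cons h q => exact ⟨_, h⟩
  obtain ⟨u, hu⟩ := hadjex
  have huindep : IsIndepSet G ({u} : Finset V) := by
    intro a ha b hb hab
    rw [Finset.mem_singleton] at ha hb
    subst ha; subst hb
    exact G.loopless.irrefl _ hab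
  obtain ⟨M₂, hM₂sub, hM₂, hmax₂⟩ := exists_maximal_sup (IsIndepSet G) huindep
  have hvM₂ : v ∉ M₂ := fun hmem =>
    hM₂ hmem (hM₂sub (Finset.mem_singleton_self u)) hu
  have hM₂card : M₂.card = indepNum G := maximal_card_eq h1wc.1 ⟨hM₂, hmax₂⟩
  have hmax₁' : ∀ T, IsIndepSet G T → v ∉ T → M₁ ⊆ T → M₁ = T :=
    fun T hT hvT hsub => hmax₁ T ⟨hT, hvT⟩ hsub
  have hmax₂' : ∀ T, IsIndepSet G T → v ∉ T → M₂ ⊆ T → M₂ = T :=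
    fun T hT _ hsub => hmax₂ T hT hsub
  have heq : M₁.card = M₂.card :=
    wc_del (h1wc.2.2 v) hM₁.1 hM₁.2 hmax₁' hM₂ hvM₂ hmax₂'
  omega

/-- Key counting lemma: every independent set `S` has at least `2(α−|S|)` extensions. -/
lemma extSet_card_ge {G : SimpleGraph V} (hconn : G.Connected)
    (hcard : 2 < Fintype.card V) (h1wc : IsOneWellCovered G) :
    ∀ (m : ℕ) (S : Finset V), IsIndepSet G S → indepNum G - S.card ≤ m →
      2 * (indepNum G - S.card) ≤ (extSet G S).card := by
  intro m
  induction m with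
  | zero =>
    intro S hS hle
    omega
  | succ n ih =>
    intro S hS hle
    rcases Nat.eq_zero_or_pos (indepNum G - S.card) with h0 | hpos
    · omega
    · have hlt : S.card < indepNum G := by omega
      obtain ⟨M, hSM, hM, hmax⟩ := exists_maximal_sup (IsIndepSet G) hS
      have hMcard : M.card = indepNum G := maximal_card_eq h1wc.1 ⟨hM, hmax⟩
      have hne : ∃ v, v ∈ M ∧ v ∉ S := by
        by_contra hc
        push_neg at hc
        have hsub : M ⊆ S := fun x hx => hc x hx
        have := Finset.card_le_card hsub
        omega
      obtain ⟨v, hvM, hvS⟩ := hne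
      have hvext : v ∈ extSet G S :=
        mem_extSet.2 ⟨hvS, fun u hu hadj => hM (hSM hu) hvM hadj⟩
      obtain ⟨w, hwext, hvw⟩ := no_isolated_ext hconn hcard h1wc hS hvext
      have hS' : IsIndepSet G (insert v S) := isIndepSet_insert hS hvext
      have hcard' : (insert v S).card = S.card + 1 := Finset.card_insert_of_notMem hvS
      have hvne : v ≠ w := G.ne_of_adj hvw
      have hsub2 : extSet G (insert v S) ⊆ extSet G S := by
        intro x hx
        rw [mem_extSet] at hx ⊢
        refine ⟨fun hxS => hx.1 (Finset.mem_insert_of_mem hxS), fun u hu => hx.2 u (Finset.mem_insert_of_mem hu)⟩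
      have hwnot : w ∉ extSet G (insert v S) := by
        rw [mem_extSet]
        rintro ⟨-, h2⟩
        exact h2 v (Finset.mem_insert_self v S) hvw
      have hvnot : v ∉ insert w (extSet G (insert v S)) := by
        rw [Finset.mem_insert]
        rintro (rfl | hmem)
        · exact hvne rfl
        · exact (mem_extSet.1 hmem).1 (Finset.mem_insert_self v S)
      have hsub3 : insert v (insert w (extSet G (insert v S))) ⊆ extSet G S := by
        intro x hx
        rcases Finset.mem_insert.1 hx with rfl | hx'
        · exact hvext
        · rcases Finset.mem_insert.1 hx' with rfl | hx''
          · exact hwext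
          · exact hsub2 hx''
      have hc3 : (insert v (insert w (extSet G (insert v S)))).card
          = (extSet G (insert v S)).card + 2 := by
        rw [Finset.card_insert_of_notMem hvnot, Finset.card_insert_of_notMem hwnot]
      have hle3 := Finset.card_le_card hsub3
      have ih' := ih (insert v S) hS' (by omega)
      omega

end MyAux2

/-- If `G` is a connected `1`-well-covered graph with more than two
vertices and `α = α(G)`, then `s_0 ≤ s_1 ≤ ⋯ ≤ s_{⌈2α/3⌉}`. -/
theorem stmt_8 {V : Type*} [Fintype V] (G : SimpleGraph V)
    (hconn : G.Connected) (hcard : 2 < Fintype.card V) (h1wc : IsOneWellCovered G)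
    (alpha : ℕ) (ha : alpha = indepNum G) :
    ∀ k : ℕ, k < (2 * alpha + 2) / 3 → indepCount G k ≤ indepCount G (k + 1) := by
  intro k hk
  subst ha
  set α := indepNum G with hα
  have hk3 : 3 * k + 3 ≤ 2 * α + 2 := by omega
  have hkα : k < α := by omega
  set A₁ := Finset.univ.filter fun S : Finset V => IsIndepSet G S ∧ S.card = k with hA₁
  set A₂ := Finset.univ.filter fun S : Finset V => IsIndepSet G S ∧ S.card = k + 1 with hA₂
  -- lower bound on extensions
  have hext : ∀ S ∈ A₁, 2 * (α - k) ≤ (extSet G S).card := by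
    intro S hS
    rw [hA₁, Finset.mem_filter] at hS
    have := extSet_card_ge hconn hcard h1wc (α - S.card) S hS.2.1 le_rfl
    rw [hS.2.2] at this
    exact this
  -- double counting via sigma finsets
  have hbij : (A₁.sigma fun S => extSet G S).card = (A₂.sigma fun T => T).card := by
    apply Finset.card_bij (fun a _ => (⟨insert a.2 a.1, a.2⟩ : Σ _ : Finset V, V))
    · rintro ⟨S, v⟩ hmem
      rw [Finset.mem_sigma] at hmem
      obtain ⟨hS, hv⟩ := hmem
      rw [hA₁, Finset.mem_filter] at hS
      rw [Finset.mem_sigma]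
      constructor
      · rw [hA₂, Finset.mem_filter]
        refine ⟨Finset.mem_univ _, isIndepSet_insert hS.2.1 hv, ?_⟩
        rw [Finset.card_insert_of_notMem (mem_extSet.1 hv).1, hS.2.2]
      · exact Finset.mem_insert_self _ _
    · rintro ⟨S₁, v₁⟩ h₁ ⟨S₂, v₂⟩ h₂ heq
      rw [Finset.mem_sigma] at h₁ h₂
      have hv : v₁ = v₂ := congrArg (fun s : Σ _ : Finset V, V => s.2) heq
      subst hv
      have hins : insert v₁ S₁ = insert v₁ S₂ :=
        congrArg (fun s : Σ _ : Finset V, V => s.1) heq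
      have hv₁ : v₁ ∉ S₁ := (mem_extSet.1 h₁.2).1
      have hv₂ : v₁ ∉ S₂ := (mem_extSet.1 h₂.2).1
      have : S₁ = S₂ := by
        have e1 : (insert v₁ S₁).erase v₁ = S₁ := Finset.erase_insert hv₁
        have e2 : (insert v₁ S₂).erase v₁ = S₂ := Finset.erase_insert hv₂
        rw [← e1, ← e2, hins]
      subst this
      rfl
    · rintro ⟨T, v⟩ hmem
      rw [Finset.mem_sigma] at hmem
      obtain ⟨hT, hv⟩ := hmem
      rw [hA₂, Finset.mem_filter] at hT
      refine ⟨⟨T.erase v, v⟩, ?_, ?_⟩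
      · rw [Finset.mem_sigma]
        constructor
        · rw [hA₁, Finset.mem_filter]
          refine ⟨Finset.mem_univ _, ?_, ?_⟩
          · intro a ha b hb hab
            exact hT.2.1 (Finset.mem_of_mem_erase ha) (Finset.mem_of_mem_erase hb) hab
          · rw [Finset.card_erase_of_mem hv, hT.2.2]; omega
        · rw [mem_extSet]
          exact ⟨Finset.notMem_erase v T,
            fun u hu hadj => hT.2.1 (Finset.mem_of_mem_erase hu) hv hadj⟩
      · show (⟨insert v (T.erase v), v⟩ : Σ _ : Finset V, V) = ⟨T, v⟩
        rw [Finset.insert_erase hv]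
  rw [Finset.card_sigma, Finset.card_sigma] at hbij
  have hsum1 : A₁.card * (2 * (α - k)) ≤ ∑ S ∈ A₁, (extSet G S).card := by
    calc A₁.card * (2 * (α - k)) = ∑ _S ∈ A₁, 2 * (α - k) := by
          rw [Finset.sum_const, smul_eq_mul]
      _ ≤ ∑ S ∈ A₁, (extSet G S).card := Finset.sum_le_sum hext
  have hsum2 : ∑ T ∈ A₂, T.card = A₂.card * (k + 1) := by
    rw [Finset.sum_congr rfl (fun T hT => ((Finset.mem_filter.1 hT).2.2 : T.card = k + 1)),
      Finset.sum_const, smul_eq_mul]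
  have hmain : A₁.card * (2 * (α - k)) ≤ A₂.card * (k + 1) := by omega
  have h2 : k + 1 ≤ 2 * (α - k) := by omega
  have hfin : A₁.card * (2 * (α - k)) ≤ A₂.card * (2 * (α - k)) :=
    hmain.trans (Nat.mul_le_mul_left _ h2)
  have hpos : 0 < 2 * (α - k) := by omega
  have : A₁.card ≤ A₂.card := Nat.le_of_mul_le_mul_right hfin hpos
  simpa [indepCount, hA₁, hA₂] using this
end

section
/- Let G be a connected finite simple graph of order n > 2 which is 1-well-covered, and let α = α(G). Then for every integer k with 1 ≤ k < α, we have the strict inequality (k+1)·s_{k+1} < (n − 2k)·s_k. -/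
open Finset
open scoped Classical

variable {V : Type*}

set_option linter.unusedSectionVars false
section Lemmas
variable [Fintype V] {G : SimpleGraph V} {S T M A : Finset V} {v : V}

lemma indep_subset (h : IsIndepSet G S) (hTS : T ⊆ S) : IsIndepSet G T :=
  fun _ hu _ hv => h (hTS hu) (hTS hv)

lemma indep_card_le (h : IsIndepSet G S) : S.card ≤ indepNum G :=
  Finset.le_sup (by simp [h])

lemma exists_indep_card_eq (G : SimpleGraph V) :
    ∃ S : Finset V, IsIndepSet G S ∧ S.card = indepNum G := by
  obtain ⟨S, hS, hcard⟩ := Finset.exists_mem_eq_sup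
    (Finset.univ.filter fun S : Finset V => IsIndepSet G S)
    ⟨∅, Finset.mem_filter.2 ⟨Finset.mem_univ _, fun u hu => by simp at hu⟩⟩ Finset.card
  exact ⟨S, by simpa using hS, hcard.symm⟩

/-- maximality avoiding a vertex `v` -/
def MaxAvoid (G : SimpleGraph V) (v : V) (M : Finset V) : Prop :=
  IsIndepSet G M ∧ v ∉ M ∧ ∀ w, w ∉ M → w ≠ v → ∃ u ∈ M, G.Adj u w

lemma exists_nbr_of_not_indep_insert {w : V} (hM : IsIndepSet G M)
    (h : ¬ IsIndepSet G (insert w M)) : ∃ u ∈ M, G.Adj u w := by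
  by_contra hno
  push_neg at hno
  apply h
  intro a ha b hb
  rcases Finset.mem_insert.1 ha with rfl | ha' <;> rcases Finset.mem_insert.1 hb with rfl | hb'
  · exact fun h' => G.irrefl h'
  · exact fun h' => hno b hb' (G.adj_symm h')
  · exact hno a ha'
  · exact hM ha' hb'

lemma indep_insert_of_no_nbr {w : V} (hM : IsIndepSet G M)
    (h : ∀ u ∈ M, ¬ G.Adj u w) : IsIndepSet G (insert w M) := by
  by_contra hno
  obtain ⟨u, hu, hadj⟩ := exists_nbr_of_not_indep_insert hM hno
  exact h u hu hadj

lemma exists_maxAvoid (hS : IsIndepSet G S) (hvS : v ∉ S) :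
    ∃ M, S ⊆ M ∧ MaxAvoid G v M := by
  classical
  set F : Finset (Finset V) :=
    Finset.univ.filter (fun T : Finset V => IsIndepSet G T ∧ S ⊆ T ∧ v ∉ T) with hF
  have hSF : S ∈ F := by simp [hF, hS, hvS]
  obtain ⟨M, hMF, hmax⟩ := Finset.exists_max_image F Finset.card ⟨S, hSF⟩
  simp only [hF, Finset.mem_filter, Finset.mem_univ, true_and] at hMF
  obtain ⟨hMi, hSM, hvM⟩ := hMF
  refine ⟨M, hSM, hMi, hvM, ?_⟩
  intro w hwM hwv
  by_contra hno
  push_neg at hno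
  have hins : IsIndepSet G (insert w M) := indep_insert_of_no_nbr hMi hno
  have hmem : insert w M ∈ F := by
    simp only [hF, Finset.mem_filter, Finset.mem_univ, true_and]
    refine ⟨hins, hSM.trans (Finset.subset_insert _ _), fun h => ?_⟩
    rcases Finset.mem_insert.1 h with rfl | h'
    · exact hwv rfl
    · exact hvM h'
  have := hmax _ hmem
  rw [Finset.card_insert_of_notMem hwM] at this
  omega

lemma exists_maximal_superset (hS : IsIndepSet G S) :
    ∃ M, S ⊆ M ∧ IsMaximalIndepSet G M := by
  classical
  set F : Finset (Finset V) :=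
    Finset.univ.filter (fun T : Finset V => IsIndepSet G T ∧ S ⊆ T) with hF
  have hSF : S ∈ F := by simp [hF, hS]
  obtain ⟨M, hMF, hmax⟩ := Finset.exists_max_image F Finset.card ⟨S, hSF⟩
  simp only [hF, Finset.mem_filter, Finset.mem_univ, true_and] at hMF
  obtain ⟨hMi, hSM⟩ := hMF
  refine ⟨M, hSM, hMi, ?_⟩
  intro T hT hMT
  have hTF : T ∈ F := by
    simp only [hF, Finset.mem_filter, Finset.mem_univ, true_and]
    exact ⟨hT, hSM.trans hMT⟩
  exact Finset.eq_of_subset_of_card_le hMT (hmax _ hTF)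

lemma maximal_has_nbr (hM : IsMaximalIndepSet G M) {w : V} (hw : w ∉ M) :
    ∃ u ∈ M, G.Adj u w := by
  apply exists_nbr_of_not_indep_insert hM.1
  intro h
  exact hw (hM.2 _ h (Finset.subset_insert _ _) ▸ Finset.mem_insert_self w M)

lemma maximal_card (hwc : IsWellCovered G) (hM : IsMaximalIndepSet G M) :
    M.card = indepNum G := by
  obtain ⟨S, hSi, hScard⟩ := exists_indep_card_eq G
  obtain ⟨M', hSM', hM'⟩ := exists_maximal_superset hSi
  have h1 : M'.card = indepNum G :=
    le_antisymm (indep_card_le hM'.1) (hScard ▸ Finset.card_le_card hSM')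
  exact (hwc M M' hM hM').trans h1

end Lemmas

set_option linter.unusedSectionVars false
section Step2
variable [Fintype V] {G : SimpleGraph V} {S T M A : Finset V} {v : V}

/-- transfer a `MaxAvoid` set to a maximal independent set of the vertex-deleted graph -/
lemma maxAvoid_induce (h : MaxAvoid G v M) :
    IsMaximalIndepSet (G.induce ({v}ᶜ : Set V))
      (M.subtype (· ∈ ({v}ᶜ : Set V))) := by
  obtain ⟨hMi, hvM, hmax⟩ := h
  constructor
  · intro a ha b hb hadj
    rw [Finset.mem_subtype] at ha hb
    exact hMi ha hb hadj
  · intro T' hT' hsub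
    apply Finset.Subset.antisymm hsub
    intro x hx
    rw [Finset.mem_subtype]
    by_contra hxM
    have hxv : (x : V) ≠ v := x.2
    obtain ⟨u, huM, hadj⟩ := hmax x hxM hxv
    have huv : u ≠ v := fun h => hvM (h ▸ huM)
    have hu' : (⟨u, huv⟩ : ({v}ᶜ : Set V)) ∈ M.subtype (· ∈ ({v}ᶜ : Set V)) := by
      rw [Finset.mem_subtype]; exact huM
    exact hT' (hsub hu') hx hadj

lemma subtype_card (hvM : v ∉ M) :
    (M.subtype (· ∈ ({v}ᶜ : Set V))).card = M.card := by
  conv_rhs => rw [← Finset.subtype_map_of_mem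
    (p := (· ∈ ({v}ᶜ : Set V))) (s := M) (fun x hx => fun h => hvM (h ▸ hx))]
  rw [Finset.card_map]

lemma exists_nbr (hconn : G.Connected) (h2 : 2 ≤ Fintype.card V) (v : V) :
    ∃ u, G.Adj v u := by
  obtain ⟨w, hw⟩ := Fintype.exists_ne_of_one_lt_card (by omega) v
  obtain ⟨p⟩ := hconn v w
  cases p with
  | nil => exact absurd rfl hw.symm
  | cons h _ => exact ⟨_, h⟩

lemma maxAvoid_card (hconn : G.Connected) (h1wc : IsOneWellCovered G)
    (hM : MaxAvoid G v M) : M.card = indepNum G := by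
  obtain ⟨u, huv⟩ := exists_nbr hconn h1wc.2.1 v
  have hu : IsIndepSet G {u} := by
    intro a ha b hb
    simp only [Finset.mem_singleton] at ha hb
    subst ha; subst hb; exact fun h => G.irrefl h
  obtain ⟨S, hSsub, hSmax⟩ := exists_maximal_superset hu
  have huS : u ∈ S := hSsub (Finset.mem_singleton_self u)
  have hvS : v ∉ S := fun hvS => hSmax.1 huS hvS (G.adj_symm huv)
  have hSavoid : MaxAvoid G v S := by
    refine ⟨hSmax.1, hvS, fun w hwS _ => ?_⟩
    exact maximal_has_nbr hSmax hwS
  have hScard : S.card = indepNum G := maximal_card h1wc.1 hSmax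
  have := h1wc.2.2 v _ _ (maxAvoid_induce hM) (maxAvoid_induce hSavoid)
  rw [subtype_card hM.2.1, subtype_card hSavoid.2.1] at this
  omega

end Step2

set_option linter.unusedSectionVars false
section Step3
variable [Fintype V] {G : SimpleGraph V} {S T M A : Finset V} {v : V}

lemma two_nbrs (hconn : G.Connected) (hn : 3 ≤ Fintype.card V)
    (h1wc : IsOneWellCovered G) {x b : V} (hxb : G.Adj x b) :
    ∃ c, G.Adj x c ∧ c ≠ b := by
  by_contra hno
  push_neg at hno
  -- every neighbor of x is b
  by_cases hb : ∃ c, G.Adj b c ∧ c ≠ x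
  · obtain ⟨c, hbc, hcx⟩ := hb
    have hc : IsIndepSet G {c} := by
      intro a ha b' hb'
      simp only [Finset.mem_singleton] at ha hb'
      subst ha; subst hb'; exact fun h => G.irrefl h
    obtain ⟨M, hcM, hMav⟩ := exists_maxAvoid hc (by simpa using hcx.symm)
    have hcM' : c ∈ M := hcM (Finset.mem_singleton_self c)
    have hbM : b ∉ M := fun h => hMav.1 h hcM' hbc
    have hxM : x ∉ M := hMav.2.1
    have hins : IsIndepSet G (insert x M) := by
      apply indep_insert_of_no_nbr hMav.1
      intro u hu hadj
      have := hno u (G.adj_symm hadj)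
      subst this
      exact hbM hu
    have h1 := indep_card_le hins
    have h2 := maxAvoid_card hconn h1wc hMav
    rw [Finset.card_insert_of_notMem hxM] at h1
    omega
  · push_neg at hb
    -- N(b) ⊆ {x}, N(x) ⊆ {b}: closed pair, contradiction with connectivity
    have closure : ∀ (z y : V), (z = x ∨ z = b) → G.Walk z y → (y = x ∨ y = b) := by
      intro z y hz p
      induction p with
      | nil => exact hz
      | cons h p ih =>
        rename_i a m w
        rcases hz with rfl | rfl
        · exact ih (Or.inr (hno m h))
        · exact ih (Or.inl (hb m h))
    have : ∃ w : V, w ≠ x ∧ w ≠ b := by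
      by_contra hw
      push_neg at hw
      have : (Finset.univ : Finset V) ⊆ {x, b} := by
        intro w _
        rcases em (w = x) with rfl | h
        · simp
        · simp [hw w h]
      have := Finset.card_le_card this
      have hle : ({x, b} : Finset V).card ≤ 2 := Finset.card_insert_le _ _ |>.trans (by simp)
      simp only [Finset.card_univ] at this
      omega
    obtain ⟨w, hwx, hwb⟩ := this
    obtain ⟨p⟩ := hconn x w
    rcases closure x w (Or.inl rfl) p with rfl | rfl
    · exact hwx rfl
    · exact hwb rfl

lemma exists_maximal_disjoint (hconn : G.Connected) (h1wc : IsOneWellCovered G)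
    (hA : IsIndepSet G A) :
    ∃ M, IsMaximalIndepSet G M ∧ M ∩ A = ∅ := by
  classical
  set F : Finset (Finset V) := Finset.univ.filter (IsMaximalIndepSet G) with hF
  have hFne : F.Nonempty := by
    obtain ⟨M, _, hM⟩ := exists_maximal_superset (G := G) (S := (∅ : Finset V))
      (fun u hu => by simp at hu)
    exact ⟨M, by simp [hF, hM]⟩
  obtain ⟨M₀, hM₀F, hmin⟩ := Finset.exists_min_image F (fun M => (M ∩ A).card) hFne
  simp only [hF, Finset.mem_filter, Finset.mem_univ, true_and] at hM₀F
  refine ⟨M₀, hM₀F, ?_⟩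
  by_contra hne
  obtain ⟨s, hs⟩ := Finset.nonempty_iff_ne_empty.2 hne
  have hsM₀ : s ∈ M₀ := (Finset.mem_inter.1 hs).1
  have hsA : s ∈ A := (Finset.mem_inter.1 hs).2
  have herase : IsIndepSet G (M₀.erase s) := indep_subset hM₀F.1 (Finset.erase_subset _ _)
  obtain ⟨M, hsub, hMav⟩ := exists_maxAvoid herase (Finset.notMem_erase s M₀)
  have hMcard : M.card = indepNum G := maxAvoid_card hconn h1wc hMav
  -- M is maximal in G
  have hsnbr : ∃ u ∈ M, G.Adj u s := by
    apply exists_nbr_of_not_indep_insert hMav.1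
    intro hins
    have := indep_card_le hins
    rw [Finset.card_insert_of_notMem hMav.2.1] at this
    omega
  have hMmax : IsMaximalIndepSet G M := by
    refine ⟨hMav.1, fun T hT hMT => ?_⟩
    apply Finset.Subset.antisymm hMT
    intro w hwT
    by_contra hwM
    rcases em (w = s) with rfl | hws
    · obtain ⟨u, huM, hadj⟩ := hsnbr
      exact hT (hMT huM) hwT hadj
    · obtain ⟨u, huM, hadj⟩ := hMav.2.2 w hwM hws
      exact hT (hMT huM) hwT hadj
  -- M ∩ A is strictly smaller
  have hsub2 : M ∩ A ⊆ (M₀ ∩ A).erase s := by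
    intro a ha
    obtain ⟨haM, haA⟩ := Finset.mem_inter.1 ha
    have has : a ≠ s := fun h => hMav.2.1 (h ▸ haM)
    rw [Finset.mem_erase]
    refine ⟨has, Finset.mem_inter.2 ⟨?_, haA⟩⟩
    by_contra haM₀
    obtain ⟨t, htM₀, hadj⟩ := maximal_has_nbr hM₀F haM₀
    have hts : t ≠ s := fun h => hA hsA haA (h ▸ hadj)
    have htM : t ∈ M := hsub (Finset.mem_erase.2 ⟨hts, htM₀⟩)
    exact hMav.1 htM haM hadj
  have hlt : (M ∩ A).card < (M₀ ∩ A).card := by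
    calc (M ∩ A).card ≤ ((M₀ ∩ A).erase s).card := Finset.card_le_card hsub2
    _ < (M₀ ∩ A).card := Finset.card_erase_lt_of_mem hs
  have := hmin M (by simp [hF, hMmax])
  omega

end Step3

set_option linter.unusedSectionVars false
section Step4
variable [Fintype V] {G : SimpleGraph V} {S T M A : Finset V} {v : V}

lemma mem_neigh {w : V} : w ∈ neigh G A ↔ ∃ u ∈ A, G.Adj u w := by
  simp [neigh]

lemma neigh_disjoint (hA : IsIndepSet G A) : A ∩ neigh G A = ∅ := by
  rw [Finset.eq_empty_iff_forall_notMem]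
  intro a ha
  obtain ⟨haA, haN⟩ := Finset.mem_inter.1 ha
  obtain ⟨u, huA, hadj⟩ := mem_neigh.1 haN
  exact hA huA haA hadj

/-- exchange lemma: any maximal independent set disjoint from an independent
set `A` meets `N(A)` in at least `|A|` vertices. -/
lemma card_le_inter_neigh (hwc : IsWellCovered G) (hA : IsIndepSet G A)
    (hM : IsMaximalIndepSet G M) (hdisj : M ∩ A = ∅) :
    A.card ≤ (neigh G A ∩ M).card := by
  classical
  set T : Finset V := A ∪ (M \ neigh G A) with hT
  have hTi : IsIndepSet G T := by
    intro a ha b hb hadj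
    rw [hT, Finset.mem_union] at ha hb
    rcases ha with haA | haM <;> rcases hb with hbA | hbM
    · exact hA haA hbA hadj
    · obtain ⟨hbM', hbN⟩ := Finset.mem_sdiff.1 hbM
      exact hbN (mem_neigh.2 ⟨a, haA, hadj⟩)
    · obtain ⟨haM', haN⟩ := Finset.mem_sdiff.1 haM
      exact haN (mem_neigh.2 ⟨b, hbA, G.adj_symm hadj⟩)
    · exact hM.1 (Finset.mem_sdiff.1 haM).1 (Finset.mem_sdiff.1 hbM).1 hadj
  have hdis : Disjoint A (M \ neigh G A) := by
    rw [Finset.disjoint_left]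
    intro a haA haM
    have : a ∈ M ∩ A := Finset.mem_inter.2 ⟨(Finset.mem_sdiff.1 haM).1, haA⟩
    simp [hdisj] at this
  have hTcard : T.card = A.card + (M \ neigh G A).card := Finset.card_union_of_disjoint hdis
  have hsplit : (M ∩ neigh G A).card + (M \ neigh G A).card = M.card :=
    Finset.card_inter_add_card_sdiff M (neigh G A)
  have hle : T.card ≤ indepNum G := indep_card_le hTi
  have hMcard : M.card = indepNum G := maximal_card hwc hM
  rw [Finset.inter_comm]
  omega

/-- THE KEY LEMMA: in a connected 1-well-covered graph with ≥ 3 vertices,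
every nonempty non-maximum independent set `A` has `|N(A)| ≥ |A| + 1`. -/
lemma neigh_card_gt (hconn : G.Connected) (hn : 3 ≤ Fintype.card V)
    (h1wc : IsOneWellCovered G) (hA : IsIndepSet G A) (hAne : A.Nonempty)
    (hlt : A.card < indepNum G) :
    A.card + 1 ≤ (neigh G A).card := by
  classical
  set B := neigh G A with hB
  by_contra hle
  push_neg at hle
  have hBk : B.card ≤ A.card := by omega
  obtain ⟨M₀, hM₀max, hM₀disj⟩ := exists_maximal_disjoint hconn h1wc hA
  have hE := card_le_inter_neigh h1wc.1 hA hM₀max hM₀disj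
  rw [← hB] at hE
  have hBsub : B ∩ M₀ ⊆ B := Finset.inter_subset_left
  have hBM₀ : B ∩ M₀ = B := Finset.eq_of_subset_of_card_le hBsub (by omega)
  have hBcard : B.card = A.card := le_antisymm hBk (by
    have := Finset.card_le_card hBsub; omega)
  have hBM : B ⊆ M₀ := by
    rw [← hBM₀]; exact Finset.inter_subset_right
  have hBi : IsIndepSet G B := indep_subset hM₀max.1 hBM
  -- pick b ∈ B : a neighbor of some a₀ ∈ A
  obtain ⟨a₀, ha₀⟩ := hAne
  obtain ⟨b, hab⟩ := exists_nbr hconn (by omega) a₀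
  have hbB : b ∈ B := mem_neigh.2 ⟨a₀, ha₀, hab⟩
  -- build M' maximal avoiding b containing B.erase b
  have hBei : IsIndepSet G (B.erase b) := indep_subset hBi (Finset.erase_subset _ _)
  obtain ⟨M', hsub', hM'av⟩ := exists_maxAvoid hBei (Finset.notMem_erase b B)
  have hM'card : M'.card = indepNum G := maxAvoid_card hconn h1wc hM'av
  -- A ∩ M' = ∅
  have hAM' : M' ∩ A = ∅ := by
    rw [Finset.eq_empty_iff_forall_notMem]
    intro a' ha'
    obtain ⟨ha'M, ha'A⟩ := Finset.mem_inter.1 ha'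
    -- a' has a neighbor in B.erase b
    obtain ⟨d, hd⟩ := exists_nbr hconn (by omega) a'
    have hdB : d ∈ B := mem_neigh.2 ⟨a', ha'A, hd⟩
    have : ∃ c, G.Adj a' c ∧ c ≠ b := by
      rcases em (d = b) with rfl | hdb
      · exact two_nbrs hconn hn h1wc hd
      · exact ⟨d, hd, hdb⟩
    obtain ⟨c, hac, hcb⟩ := this
    have hcB : c ∈ B := mem_neigh.2 ⟨a', ha'A, hac⟩
    have hcM' : c ∈ M' := hsub' (Finset.mem_erase.2 ⟨hcb, hcB⟩)
    exact hM'av.1 ha'M hcM' hac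
  -- case: insert b M' independent → too big
  rcases em (IsIndepSet G (insert b M')) with hins | hins
  · have := indep_card_le hins
    rw [Finset.card_insert_of_notMem hM'av.2.1] at this
    omega
  · -- M' is maximal in G
    obtain ⟨u, huM', hub⟩ := exists_nbr_of_not_indep_insert hM'av.1 hins
    have hM'max : IsMaximalIndepSet G M' := by
      refine ⟨hM'av.1, fun T hT hMT => ?_⟩
      apply Finset.Subset.antisymm hMT
      intro w hwT
      by_contra hwM
      rcases em (w = b) with rfl | hwb
      · exact hT (hMT huM') hwT hub
      · obtain ⟨u', hu'M, hadj⟩ := hM'av.2.2 w hwM hwb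
        exact hT (hMT hu'M) hwT hadj
    have hE' := card_le_inter_neigh h1wc.1 hA hM'max hAM'
    rw [← hB] at hE'
    have hApos : 1 ≤ A.card := Finset.card_pos.2 ⟨a₀, ha₀⟩
    have hsubB : B ∩ M' ⊆ B.erase b := by
      intro x hx
      obtain ⟨hxB, hxM⟩ := Finset.mem_inter.1 hx
      exact Finset.mem_erase.2 ⟨fun h => hM'av.2.1 (h ▸ hxM), hxB⟩
    have := Finset.card_le_card hsubB
    have hbe : (B.erase b).card = B.card - 1 := Finset.card_erase_of_mem hbB
    have hBpos : 1 ≤ B.card := Finset.card_pos.2 ⟨b, hbB⟩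
    omega

end Step4

set_option linter.unusedSectionVars false


/-- If `G` is a connected `1`-well-covered graph of order `n > 2`
and `α = α(G)`, then `(k+1)·s_{k+1} < (n − 2k)·s_k` for all `1 ≤ k < α`. -/
theorem stmt_9 {V : Type*} [Fintype V] (G : SimpleGraph V) (n : ℕ)
    (hn : Fintype.card V = n) (hconn : G.Connected) (hcard : 2 < n)
    (h1wc : IsOneWellCovered G) (alpha : ℕ) (ha : alpha = indepNum G)
    (k : ℕ) (hk1 : 1 ≤ k) (hk2 : k < alpha) :
    ((k : ℤ) + 1) * indepCount G (k + 1) < ((n : ℤ) - 2 * k) * indepCount G k := by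
  classical
  have hn3 : 3 ≤ Fintype.card V := by omega
  set Ik : Finset (Finset V) :=
    Finset.univ.filter (fun S : Finset V => IsIndepSet G S ∧ S.card = k) with hIk
  set Ik1 : Finset (Finset V) :=
    Finset.univ.filter (fun S : Finset V => IsIndepSet G S ∧ S.card = k + 1) with hIk1
  have hcountk : indepCount G k = Ik.card := rfl
  have hcountk1 : indepCount G (k + 1) = Ik1.card := rfl
  -- the set of pairs (A, v) with A ∈ Ik, v ∉ A, A ∪ {v} independent
  set P : Finset (Finset V × V) :=
    Finset.univ.filter (fun p : Finset V × V =>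
      IsIndepSet G p.1 ∧ p.1.card = k ∧ p.2 ∉ p.1 ∧ IsIndepSet G (insert p.2 p.1)) with hP
  -- key bound for each A ∈ Ik
  have hkey : ∀ A : Finset V, IsIndepSet G A → A.card = k →
      2 * k + 1 ≤ (A ∪ neigh G A).card := by
    intro A hAi hAc
    have hne : A.Nonempty := Finset.card_pos.1 (by omega)
    have hlt : A.card < indepNum G := by omega
    have h1 := neigh_card_gt hconn hn3 h1wc hAi hne hlt
    have hdisj : A ∩ neigh G A = ∅ := neigh_disjoint hAi
    have : (A ∪ neigh G A).card = A.card + (neigh G A).card :=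
      Finset.card_union_of_disjoint (Finset.disjoint_left.2
        (fun a ha hb => by
          have : a ∈ A ∩ neigh G A := Finset.mem_inter.2 ⟨ha, hb⟩
          simp [hdisj] at this))
    omega
  have hnk : 2 * k + 1 ≤ n := by
    -- there exists an independent set of size k
    obtain ⟨S, hSi, hSc⟩ := exists_indep_card_eq G
    obtain ⟨A, hAS, hAc⟩ := Finset.exists_subset_card_eq (s := S) (n := k) (by omega)
    have hAi := indep_subset hSi hAS
    have := hkey A hAi hAc
    have hle : (A ∪ neigh G A).card ≤ Fintype.card V := Finset.card_le_univ _
    omega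
  -- s_k ≥ 1
  have hsk : 1 ≤ Ik.card := by
    obtain ⟨S, hSi, hSc⟩ := exists_indep_card_eq G
    obtain ⟨A, hAS, hAc⟩ := Finset.exists_subset_card_eq (s := S) (n := k) (by omega)
    exact Finset.card_pos.2 ⟨A, by simp [hIk, indep_subset hSi hAS, hAc]⟩
  -- Count 1 : |P| ≤ Ik.card * (n - (2k+1))
  have hcount1 : P.card ≤ Ik.card * (n - (2 * k + 1)) := by
    have hfib : ∀ p ∈ P, p.1 ∈ Ik := by
      intro p hp
      simp only [hP, Finset.mem_filter, Finset.mem_univ, true_and] at hp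
      simp [hIk, hp.1, hp.2.1]
    rw [Finset.card_eq_sum_card_fiberwise hfib]
    apply Finset.sum_le_card_nsmul
    intro A hA
    simp only [hIk, Finset.mem_filter, Finset.mem_univ, true_and] at hA
    obtain ⟨hAi, hAc⟩ := hA
    have hbound := hkey A hAi hAc
    have hinj : (P.filter (fun p => p.1 = A)).card ≤
        (Finset.univ \ (A ∪ neigh G A)).card := by
      apply Finset.card_le_card_of_injOn (fun p => p.2)
      · intro p hp
        simp only [Finset.mem_coe, Finset.mem_filter] at hp ⊢
        obtain ⟨hpP, hpA⟩ := hp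
        simp only [hP, Finset.mem_filter, Finset.mem_univ, true_and] at hpP
        obtain ⟨hi, hc, hnm, hins⟩ := hpP
        rw [Finset.mem_sdiff]
        refine ⟨Finset.mem_univ _, ?_⟩
        rw [Finset.mem_union]
        rintro (h | h)
        · exact hnm (hpA ▸ h)
        · obtain ⟨u, huA, hadj⟩ := mem_neigh.1 h
          exact hins (Finset.mem_insert_of_mem (hpA ▸ huA))
            (Finset.mem_insert_self _ _) hadj
      · intro p hp q hq hpq
        simp only [Finset.coe_filter, Set.mem_setOf_eq] at hp hq
        exact Prod.ext (hp.2.trans hq.2.symm) hpq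
    have hcardW : (Finset.univ \ (A ∪ neigh G A)).card = n - (A ∪ neigh G A).card := by
      rw [Finset.card_sdiff_of_subset (Finset.subset_univ _), Finset.card_univ, hn]
    calc (P.filter (fun p => p.1 = A)).card
        ≤ n - (A ∪ neigh G A).card := by rw [← hcardW]; exact hinj
      _ ≤ n - (2 * k + 1) := by omega
  -- Count 2 : |P| = (k+1) * Ik1.card
  have hcount2 : P.card = Ik1.card * (k + 1) := by
    have hfib : ∀ p ∈ P, insert p.2 p.1 ∈ Ik1 := by
      intro p hp
      simp only [hP, Finset.mem_filter, Finset.mem_univ, true_and] at hp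
      obtain ⟨hi, hc, hnm, hins⟩ := hp
      simp only [hIk1, Finset.mem_filter, Finset.mem_univ, true_and]
      exact ⟨hins, by rw [Finset.card_insert_of_notMem hnm, hc]⟩
    rw [Finset.card_eq_sum_card_fiberwise hfib]
    rw [Finset.sum_congr rfl (fun C hC => ?_), Finset.sum_const, smul_eq_mul]
    simp only [hIk1, Finset.mem_filter, Finset.mem_univ, true_and] at hC
    obtain ⟨hCi, hCc⟩ := hC
    show (P.filter (fun p => insert p.2 p.1 = C)).card = k + 1
    rw [← hCc]
    apply Finset.card_bij (fun p _ => p.2)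
    · intro p hp
      simp only [Finset.mem_filter] at hp
      exact hp.2 ▸ Finset.mem_insert_self p.2 p.1
    · intro p hp q hq hpq
      simp only [Finset.mem_filter] at hp hq
      obtain ⟨hpP, hpC⟩ := hp
      obtain ⟨hqP, hqC⟩ := hq
      simp only [hP, Finset.mem_filter, Finset.mem_univ, true_and] at hpP hqP
      have h1 : p.1 = C.erase p.2 := by
        rw [← hpC, Finset.erase_insert hpP.2.2.1]
      have h2 : q.1 = C.erase q.2 := by
        rw [← hqC, Finset.erase_insert hqP.2.2.1]
      exact Prod.ext (by rw [h1, h2, hpq]) hpq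
    · intro v hv
      refine ⟨(C.erase v, v), ?_, rfl⟩
      simp only [Finset.mem_filter, hP, Finset.mem_univ, true_and]
      have hins : insert v (C.erase v) = C := Finset.insert_erase hv
      refine ⟨⟨indep_subset hCi (Finset.erase_subset _ _), ?_,
        Finset.notMem_erase _ _, by rw [hins]; exact hCi⟩, hins⟩
      rw [Finset.card_erase_of_mem hv, hCc]
      omega
  -- combine
  rw [hcountk, hcountk1]
  have hfinal : Ik1.card * (k + 1) ≤ Ik.card * (n - (2 * k + 1)) := hcount2 ▸ hcount1
  have hcast : (Ik1.card : ℤ) * ((k : ℤ) + 1) ≤ (Ik.card : ℤ) * ((n : ℤ) - 2 * k - 1) := by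
    have h1 : ((Ik1.card * (k + 1) : ℕ) : ℤ) ≤ ((Ik.card * (n - (2 * k + 1)) : ℕ) : ℤ) :=
      Int.ofNat_le.2 hfinal
    rw [Nat.cast_mul, Nat.cast_mul, Nat.cast_sub hnk] at h1
    push_cast at h1 ⊢
    linarith
  have hskZ : (1 : ℤ) ≤ (Ik.card : ℤ) := by exact_mod_cast hsk
  linarith [hcast, hskZ]
end
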